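/- Let K be a simplicial complex of dimension d on vertex set V and v ∈ V. Then the star of v in the d-completion Δ_d(K) equals the d-completion of the neighborhood complex Γ_K(v). -/
import Mathlib


open Finset
open scoped Classical

/-- An abstract simplicial complex: a downward-closed collection of finite sets. -/
def IsComplex {V : Type*} (K : Set (Finset V)) : Prop :=
  ∀ S ∈ K, ∀ T ⊆ S, T ∈ K

/-- `K` has dimension `d`. -/
def HasDim {V : Type*} (d : ℕ) (K : Set (Finset V)) : Prop :=
  (∀ S ∈ K, S.card ≤ d + 1) ∧ ∃ S ∈ K, S.card = d + 1

/-- The `j`-completion `Δ_j(K)`. -/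
def completion {V : Type*} (j : ℕ) (K : Set (Finset V)) : Set (Finset V) :=
  K ∪ {S | j + 2 ≤ S.card ∧ ∀ T ⊆ S, T.card ≤ j + 1 → T ∈ K}

/-- The star of a vertex `v`: `st_K(v) = {S : S ∪ {v} ∈ K}`. -/
def star {V : Type*} (K : Set (Finset V)) (v : V) : Set (Finset V) :=
  {S | insert v S ∈ K}

/-- The neighborhood complex `Γ_K(v)` of a vertex `v` of a `d`-dimensional complex. -/
def nbhdComplex {V : Type*} (d : ℕ) (K : Set (Finset V)) (v : V) : Set (Finset V) :=
  star K v ∪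
    {S | v ∉ S ∧ S ∈ K ∧ S.card = d + 1 ∧ ∀ T ⊆ S, T.card ≤ d → T ∈ star K v}

/-- For a vertex `v` of a `d`-dimensional complex `K`,
`st_{Δ_d(K)}(v) = Δ_d(Γ_K(v))`. -/
theorem stmt7 {V : Type*} (d : ℕ) (K : Set (Finset V))
    (hK : IsComplex K) (hdim : HasDim d K) (v : V) (hv : {v} ∈ K) :
    star (completion d K) v = completion d (nbhdComplex d K v) := by

  have claim : ∀ S : Finset V, (∀ T ⊆ insert v S, T.card ≤ d + 1 → T ∈ K) →
      ∀ T ⊆ insert v S, T.card ≤ d + 1 → T ∈ nbhdComplex d K v := by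
    intro S hsub T hT hTc
    by_cases hTd : T.card ≤ d
    · left
      show insert v T ∈ K
      exact hsub _ (Finset.insert_subset_iff.mpr ⟨Finset.mem_insert_self v S, hT⟩)
        ((Finset.card_insert_le _ _).trans (by omega))
    · have hTc' : T.card = d + 1 := by omega
      by_cases hvT : v ∈ T
      · left
        show insert v T ∈ K
        rw [Finset.insert_eq_self.mpr hvT]
        exact hsub _ hT hTc
      · right
        refine ⟨hvT, hsub _ hT hTc, hTc', fun T' hT' hc => ?_⟩
        show insert v T' ∈ K
        exact hsub _ (Finset.insert_subset_iff.mpr ⟨Finset.mem_insert_self v S, hT'.trans hT⟩)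
          ((Finset.card_insert_le _ _).trans (by omega))
  ext S
  simp only [_root_.star, completion, nbhdComplex, Set.mem_union, Set.mem_setOf_eq] at *
  constructor
  · rintro (h | ⟨hcard, hsub⟩)
    · exact Or.inl (Or.inl h)
    · by_cases hS : S.card ≤ d + 1
      · exact Or.inl (claim S hsub S (Finset.subset_insert v S) hS)
      · exact Or.inr ⟨by omega, fun T hT hc =>
          claim S hsub T (hT.trans (Finset.subset_insert v S)) hc⟩
  · rintro ((h | ⟨hvS, hSK, hScard, hst⟩) | ⟨hcard, hsub⟩)
    · exact Or.inl h
    · right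
      refine ⟨by rw [Finset.card_insert_of_notMem hvS, hScard], fun T hT hTc => ?_⟩
      by_cases hvT : v ∈ T
      · have h1 : T.erase v ⊆ S := fun x hx =>
          (Finset.mem_insert.mp (hT (Finset.mem_of_mem_erase hx))).resolve_left
            (Finset.ne_of_mem_erase hx)
        have h2 : (T.erase v).card ≤ d := by
          have := Finset.card_erase_of_mem hvT; omega
        have h3 : insert v (T.erase v) ∈ K := hst _ h1 h2
        rwa [Finset.insert_erase hvT] at h3
      · have hTS : T ⊆ S := fun x hx =>
          (Finset.mem_insert.mp (hT hx)).resolve_left (fun h => hvT (h ▸ hx))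
        exact hK S hSK T hTS
    · right
      refine ⟨le_trans hcard (Finset.card_le_card (Finset.subset_insert v S)),
        fun U hU hUc => ?_⟩
      by_cases hvU : v ∈ U
      · have h1 : U.erase v ⊆ S := fun x hx =>
          (Finset.mem_insert.mp (hU (Finset.mem_of_mem_erase hx))).resolve_left
            (Finset.ne_of_mem_erase hx)
        have h2 : (U.erase v).card ≤ d + 1 := by
          have := Finset.card_erase_of_mem hvU; omega
        rcases hsub _ h1 h2 with h | ⟨_, _, hc, _⟩
        · have h3 : insert v (U.erase v) ∈ K := h
          rwa [Finset.insert_erase hvU] at h3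
        · have := Finset.card_erase_of_mem hvU; omega
      · have hUS : U ⊆ S := fun x hx =>
          (Finset.mem_insert.mp (hU hx)).resolve_left (fun h => hvU (h ▸ hx))
        rcases hsub _ hUS hUc with h | ⟨_, hUK, _, _⟩
        · exact hK _ h _ (Finset.subset_insert v U)
        · exact hUK
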